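/- Let k be an algebraically closed field, let n ≥ 0, let I be a homogeneous ideal of the polynomial ring k[x₀, …, xₙ], and let V(I) := {v ∈ k^{n+1} : f(v) = 0 for all f ∈ I} be its affine cone. Define Z := {g ∈ GL_{n+1}(k) : there exists v ∈ k^{n+1}, v ≠ 0, with v ∈ V(I) and g⁻¹·v ∈ V(I)}. Then Z is Zariski closed in GL_{n+1}(k): there exists a set S of polynomials over k in the (n+1)² matrix entries such that Z = {g ∈ GL_{n+1}(k) : p(g) = 0 for all p ∈ S}. -/

import Mathlib

open MvPolynomial

namespace Stmt5Aux

variable {k : Type*} [Field k] {σ : Type*} [Fintype σ] [DecidableEq σ]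

lemma degsum' (d : σ →₀ ℕ) : ∑ i : σ, d i = d.degree :=
  (Finset.sum_subset (Finset.subset_univ d.support)
    (fun i _ hi => Finsupp.notMem_support_iff.mp hi)).symm

/-- evaluation of a homogeneous polynomial at a scalar multiple -/
lemma eval_smul_homog {f : MvPolynomial σ k} {d : ℕ} (hf : f.IsHomogeneous d)
    (c : k) (w : σ → k) : eval (c • w) f = c ^ d * eval w f := by
  conv_lhs => rw [f.as_sum]
  rw [map_sum]
  conv_rhs => rw [f.as_sum, map_sum, Finset.mul_sum]
  apply Finset.sum_congr rfl
  intro m hm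
  rw [eval_monomial, eval_monomial]
  have hdeg : m.degree = d := by
    by_contra h
    exact (Finsupp.mem_support_iff.mp hm) (hf.coeff_eq_zero h)
  have : (m.prod fun n e => (c • w) n ^ e) = c ^ d * m.prod fun n e => w n ^ e := by
    unfold Finsupp.prod
    rw [← hdeg]
    rw [Finsupp.degree_apply]
    rw [← Finset.prod_pow_eq_pow_sum]
    rw [← Finset.prod_mul_distrib]
    apply Finset.prod_congr rfl
    intro i _
    simp [mul_pow]
  rw [this]
  ring

/-- homogeneous component of `p * q` with `q` homogeneous lies in the span of `monomial α 1 * q`. -/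
lemma hc_mul_mem_span {q : MvPolynomial σ k} {d : ℕ} (hq : q.IsHomogeneous d)
    (p : MvPolynomial σ k) (N : ℕ) :
    homogeneousComponent N (p * q) ∈
      Submodule.span k {u : MvPolynomial σ k |
        ∃ α : σ →₀ ℕ, α.degree + d = N ∧ u = monomial α 1 * q} := by
  rw [show p * q = ∑ i ∈ Finset.range (p.totalDegree + 1),
      homogeneousComponent i p * q by rw [← Finset.sum_mul, sum_homogeneousComponent]]
  rw [map_sum]
  apply Submodule.sum_mem
  intro i _
  have hmem : homogeneousComponent i p * q ∈
      homogeneousSubmodule σ k (i + d) :=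
    (homogeneousComponent_isHomogeneous i p).mul hq
  rw [homogeneousComponent_of_mem hmem]
  split_ifs with hN
  · rw [(homogeneousComponent i p).as_sum, Finset.sum_mul]
    apply Submodule.sum_mem
    intro α hα
    have hαdeg : α.degree = i := by
      by_contra h
      exact (Finsupp.mem_support_iff.mp hα)
        ((homogeneousComponent_isHomogeneous i p).coeff_eq_zero h)
    have : (monomial α (coeff α (homogeneousComponent i p))) * q
        = (coeff α (homogeneousComponent i p)) • (monomial α 1 * q) := by
      rw [← smul_mul_assoc, smul_monomial, smul_eq_mul, mul_one]
    rw [this]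
    exact Submodule.smul_mem _ _ (Submodule.subset_span ⟨α, by omega, rfl⟩)
  · exact Submodule.zero_mem _

/-- eval of a homogeneous polynomial of degree N as a sum over degree-N exponents. -/
lemma eval_homog_eq_sum {p : MvPolynomial σ k} {N : ℕ} (hp : p.IsHomogeneous N)
    (v : σ → k) [Fintype {β : σ →₀ ℕ // β.degree = N}] :
    eval v p = ∑ q : {β : σ →₀ ℕ // β.degree = N},
      coeff q.1 p * eval v (monomial q.1 (1 : k)) := by
  classical
  have himg : ∑ q : {β : σ →₀ ℕ // β.degree = N},
      coeff q.1 p * eval v (monomial q.1 (1 : k))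
      = ∑ d ∈ Finset.univ.image (Subtype.val (p := fun β : σ →₀ ℕ => β.degree = N)),
        coeff d p * eval v (monomial d (1 : k)) := by
    rw [Finset.sum_image (fun a _ b _ h => Subtype.ext h)]
  rw [himg]
  have hsub : p.support ⊆
      Finset.univ.image (Subtype.val (p := fun β : σ →₀ ℕ => β.degree = N)) := by
    intro d hd
    simp only [Finset.mem_image, Finset.mem_univ, true_and]
    refine ⟨⟨d, ?_⟩, rfl⟩
    by_contra h
    exact (Finsupp.mem_support_iff.mp hd) (hp.coeff_eq_zero h)
  calc eval v p = ∑ d ∈ p.support, coeff d p * eval v (monomial d (1:k)) := by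
        conv_lhs => rw [p.as_sum, map_sum]
        exact Finset.sum_congr rfl fun d _ => by
          rw [eval_monomial, eval_monomial, one_mul]
    _ = _ := Finset.sum_subset hsub fun d _ hd => by
          rw [notMem_support_iff.mp hd, zero_mul]

lemma exists_deg_monomials_mem [IsAlgClosed k] [Nonempty σ]
    (J : Ideal (MvPolynomial σ k)) (hJ : zeroLocus k J ⊆ {0}) :
    ∃ N : ℕ, ∀ β : σ →₀ ℕ, β.degree = N → monomial β (1 : k) ∈ J := by
  have hX : ∀ i : σ, ∃ m : ℕ, (X i : MvPolynomial σ k) ^ m ∈ J := by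
    intro i
    have hmem : (X i : MvPolynomial σ k) ∈ vanishingIdeal k (zeroLocus k J) := by
      rw [mem_vanishingIdeal_iff]
      intro x hx
      have hx0 : x = 0 := hJ hx
      subst hx0
      simp
    rw [vanishingIdeal_zeroLocus_eq_radical] at hmem
    exact Ideal.mem_radical_iff.mp hmem
  choose m hm using hX
  refine ⟨∑ i : σ, (m i + 1), ?_⟩
  intro β hβ
  have hpig : ∃ i, m i + 1 ≤ β i := by
    by_contra h
    push_neg at h
    have h1 : ∑ i : σ, β i ≤ ∑ i : σ, m i :=
      Finset.sum_le_sum fun i _ => by have := h i; omega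
    have h2 : ∑ i : σ, (m i + 1) = (∑ i : σ, m i) + Fintype.card σ := by
      rw [Finset.sum_add_distrib, Finset.sum_const, smul_eq_mul, mul_one, Fintype.card]
    have h3 : 0 < Fintype.card σ := Fintype.card_pos
    have h4 : ∑ i : σ, β i = ∑ i : σ, (m i + 1) := by rw [degsum' β, hβ]
    omega
  obtain ⟨i, hi⟩ := hpig
  have hsub : Finsupp.single i (m i + 1) ≤ β := Finsupp.single_le_iff.mpr hi
  have hfac : monomial β (1 : k)
      = monomial (β - Finsupp.single i (m i + 1)) 1 * X i ^ (m i + 1) := by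
    rw [X_pow_eq_monomial, monomial_mul, one_mul, tsub_add_cancel_of_le hsub]
  rw [hfac]
  refine J.mul_mem_left _ ?_
  rw [pow_succ]
  exact J.mul_mem_right _ (hm i)

variable (k σ) in
/-- substitution `xᵢ ↦ ∑ⱼ M i j * xⱼ` -/
noncomputable def subst {A : Type*} [CommRing A] [Algebra k A] (M : Matrix σ σ A) :
    MvPolynomial σ k →ₐ[k] MvPolynomial σ A :=
  aeval (fun i => ∑ j, C (M i j) * X j)

lemma subst_isHomogeneous {A : Type*} [CommRing A] [Algebra k A] (M : Matrix σ σ A)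
    {f : MvPolynomial σ k} {d : ℕ} (hf : f.IsHomogeneous d) :
    (subst k σ M f).IsHomogeneous d := by
  have := hf.aeval (fun i => ∑ j, C (M i j) * X j)
    (n := 1) (fun i => IsHomogeneous.sum _ _ _ fun j _ => isHomogeneous_C_mul_X _ _)
  simpa [one_mul, subst] using this

lemma eval_subst (M : Matrix σ σ k) (v : σ → k) (f : MvPolynomial σ k) :
    eval v (subst k σ M f) = eval (M.mulVec v) f := by
  rw [subst, map_aeval]
  show eval₂Hom _ _ f = eval₂Hom (RingHom.id k) (M.mulVec v) f
  apply eval₂Hom_congr _ _ rfl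
  · ext a
    simp [algebraMap_eq]
  · funext i
    simp [Matrix.mulVec, dotProduct]

lemma map_subst {A B : Type*} [CommRing A] [Algebra k A] [CommRing B] [Algebra k B]
    (ε : A →+* B) (hc : ∀ c : k, ε (algebraMap k A c) = algebraMap k B c)
    (M : Matrix σ σ A) (f : MvPolynomial σ k) :
    MvPolynomial.map ε (subst k σ M f) = subst k σ (M.map ε) f := by
  rw [subst, map_aeval]
  show eval₂Hom _ _ f = _
  rw [subst, aeval_def, ← coe_eval₂Hom]
  apply eval₂Hom_congr _ _ rfl
  · ext a
    simp [MvPolynomial.algebraMap_apply, hc]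
    change ε (coeff _ (monomial 0 (algebraMap k A a))) = _
    rw [coeff_monomial, apply_ite ε, map_zero, hc]
  · funext i
    simp [Matrix.map_apply]

variable (k σ) in
/-- the "good" span set -/
def goodSet (I : Ideal (MvPolynomial σ k)) (M : Matrix σ σ k) (N : ℕ) :
    Set (MvPolynomial σ k) :=
  {u | ∃ (d : ℕ) (f : MvPolynomial σ k), f ∈ I ∧ f.IsHomogeneous d ∧
    ∃ α : σ →₀ ℕ, α.degree + d = N ∧
      (u = monomial α 1 * f ∨ u = monomial α 1 * subst k σ M f)}

lemma hcN_mem_goodSpan {I : Ideal (MvPolynomial σ k)}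
    (hI : ∀ f ∈ I, ∀ m : ℕ, homogeneousComponent m f ∈ I)
    (M : Matrix σ σ k) (N : ℕ) {x : MvPolynomial σ k}
    (hx : x ∈ Ideal.span ((I : Set (MvPolynomial σ k)) ∪ (subst k σ M '' I))) :
    homogeneousComponent N x ∈ Submodule.span k (goodSet k σ I M N) := by
  obtain ⟨c, hsupp, rfl⟩ := Submodule.mem_span_set.mp hx
  rw [Finsupp.sum, map_sum]
  apply Submodule.sum_mem
  intro a ha
  rw [smul_eq_mul]
  rcases hsupp ha with hmem | ⟨f, hf, rfl⟩
  · have hsplit : c a * a = ∑ d ∈ Finset.range (a.totalDegree + 1),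
        c a * homogeneousComponent d a := by
      rw [← Finset.mul_sum, sum_homogeneousComponent]
    rw [hsplit, map_sum]
    apply Submodule.sum_mem
    intro d _
    refine Submodule.span_mono ?_
      (hc_mul_mem_span (homogeneousComponent_isHomogeneous d a) (c a) N)
    rintro u ⟨α, hα, rfl⟩
    exact ⟨d, homogeneousComponent d a, hI a hmem d,
      homogeneousComponent_isHomogeneous d a, α, hα, Or.inl rfl⟩
  · have hsplit : c (subst k σ M f) * subst k σ M f
        = ∑ d ∈ Finset.range (f.totalDegree + 1),
          c (subst k σ M f) * subst k σ M (homogeneousComponent d f) := by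
      rw [← Finset.mul_sum, ← map_sum, sum_homogeneousComponent]
    rw [hsplit, map_sum]
    apply Submodule.sum_mem
    intro d _
    refine Submodule.span_mono ?_
      (hc_mul_mem_span (subst_isHomogeneous M (homogeneousComponent_isHomogeneous d f))
        (c (subst k σ M f)) N)
    rintro u ⟨α, hα, rfl⟩
    exact ⟨d, homogeneousComponent d f, hI f hf d,
      homogeneousComponent_isHomogeneous d f, α, hα, Or.inr rfl⟩

variable (k σ) in
/-- evaluation of a polynomial in matrix-entry variables at a matrix -/
noncomputable def eps (m : Matrix σ σ k) : MvPolynomial (σ × σ) k →+* k :=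
  eval (fun ij => m ij.1 ij.2)

variable (k σ) in
/-- the generic matrix -/
noncomputable def genM : Matrix σ σ (MvPolynomial (σ × σ) k) :=
  Matrix.of fun i j => X (i, j)

lemma map_eps_mapC (m : Matrix σ σ k) (f : MvPolynomial σ k) :
    MvPolynomial.map (eps k σ m) (MvPolynomial.map C f) = f := by
  rw [MvPolynomial.map_map]
  have : (eps k σ m).comp (C : k →+* MvPolynomial (σ × σ) k) = RingHom.id k := by
    ext a
    simp [eps]
  rw [this, MvPolynomial.map_id]

lemma map_eps_subst_adj (m : Matrix σ σ k) (f : MvPolynomial σ k) :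
    MvPolynomial.map (eps k σ m) (subst k σ (genM k σ).adjugate f)
      = subst k σ m.adjugate f := by
  rw [map_subst (eps k σ m) (fun c => by simp [eps, algebraMap_eq]) _ f]
  refine congrArg (fun M => subst k σ M f) ?_
  have h1 : (genM k σ).adjugate.map (eps k σ m) = ((genM k σ).map (eps k σ m)).adjugate := by
    have := (eps k σ m).map_adjugate (genM k σ)
    simpa [RingHom.mapMatrix_apply] using this
  have h2 : (genM k σ).map (eps k σ m) = m := by
    ext i j
    simp [genM, eps, Matrix.map_apply]
  rw [h1, h2]

lemma adj_mulVec_eq {m : Matrix σ σ k} (hdet : m.det ≠ 0) (v : σ → k) :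
    m.adjugate.mulVec v = m.det • (m⁻¹.mulVec v) := by
  rw [← Matrix.smul_mulVec]
  congr 1
  rw [Matrix.inv_def, smul_smul, Ring.mul_inverse_cancel _ (isUnit_iff_ne_zero.mpr hdet),
    one_smul]

end Stmt5Aux

open Stmt5Aux

/-- The intersection obstruction `Z_Y = {g ∈ GL_{n+1}(k) : Y ∩ gY ≠ ∅}` of a projective
variety `Y = V₊(I) ⊆ ℙⁿ(k)` is Zariski closed in `GL_{n+1}(k)`. -/
theorem stmt_5 {k : Type*} [Field k] [IsAlgClosed k] (n : ℕ)
    (I : Ideal (MvPolynomial (Fin (n + 1)) k))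
    (hI : ∀ f ∈ I, ∀ m : ℕ, MvPolynomial.homogeneousComponent m f ∈ I) :
    ∃ S : Set (MvPolynomial (Fin (n + 1) × Fin (n + 1)) k),
      {g : Matrix.GeneralLinearGroup (Fin (n + 1)) k |
          ∃ v : Fin (n + 1) → k, v ≠ 0 ∧
            (∀ f ∈ I, MvPolynomial.eval v f = 0) ∧
            (∀ f ∈ I, MvPolynomial.eval
              (((g⁻¹ : Matrix.GeneralLinearGroup (Fin (n + 1)) k) :
                Matrix (Fin (n + 1)) (Fin (n + 1)) k).mulVec v) f = 0)} =
      {g : Matrix.GeneralLinearGroup (Fin (n + 1)) k |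
          ∀ p ∈ S, MvPolynomial.eval
            (fun ij : Fin (n + 1) × Fin (n + 1) =>
              (g : Matrix (Fin (n + 1)) (Fin (n + 1)) k) ij.1 ij.2) p = 0} := by
  classical
  refine ⟨{p | ∀ h : Matrix.GeneralLinearGroup (Fin (n + 1)) k,
      (∃ v : Fin (n + 1) → k, v ≠ 0 ∧
        (∀ f ∈ I, MvPolynomial.eval v f = 0) ∧
        (∀ f ∈ I, MvPolynomial.eval
          (((h⁻¹ : Matrix.GeneralLinearGroup (Fin (n + 1)) k) :
            Matrix (Fin (n + 1)) (Fin (n + 1)) k).mulVec v) f = 0)) →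
      MvPolynomial.eval (fun ij : Fin (n + 1) × Fin (n + 1) =>
        (h : Matrix (Fin (n + 1)) (Fin (n + 1)) k) ij.1 ij.2) p = 0}, ?_⟩
  ext g
  simp only [Set.mem_setOf_eq]
  constructor
  · intro hg p hp
    exact hp g hg
  · intro hg
    by_contra hgZ
    set gm : Matrix (Fin (n + 1)) (Fin (n + 1)) k :=
      (g : Matrix (Fin (n + 1)) (Fin (n + 1)) k) with hgm
    have hdet : gm.det ≠ 0 :=
      ((Matrix.isUnit_iff_isUnit_det gm).mp g.isUnit).ne_zero
    -- Step 1: the common zero locus is trivial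
    have hJzero : MvPolynomial.zeroLocus k
        (Ideal.span ((I : Set (MvPolynomial (Fin (n + 1)) k)) ∪
          (subst k (Fin (n + 1)) gm.adjugate '' (I : Set (MvPolynomial (Fin (n + 1)) k)))))
        ⊆ {0} := by
      intro v hv
      by_contra hv0
      rw [Set.mem_singleton_iff] at hv0
      apply hgZ
      refine ⟨v, hv0, ?_, ?_⟩
      · intro f hf
        exact (MvPolynomial.mem_zeroLocus_iff.mp hv) f
          (Ideal.subset_span (Set.mem_union_left _ hf))
      · intro f hf
        rw [Matrix.coe_units_inv g]
        rw [← sum_homogeneousComponent f, map_sum]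
        apply Finset.sum_eq_zero
        intro d _
        have h1 : MvPolynomial.eval v
            (subst k (Fin (n + 1)) gm.adjugate (homogeneousComponent d f)) = 0 :=
          (MvPolynomial.mem_zeroLocus_iff.mp hv) _
            (Ideal.subset_span (Set.mem_union_right _ ⟨_, hI f hf d, rfl⟩))
        rw [eval_subst, adj_mulVec_eq hdet,
          eval_smul_homog (homogeneousComponent_isHomogeneous d f)] at h1
        exact (mul_eq_zero.mp h1).resolve_left (pow_ne_zero d hdet)
    -- Step 2: degree N with all monomials in the ideal
    obtain ⟨N, hN⟩ := exists_deg_monomials_mem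
      (Ideal.span ((I : Set (MvPolynomial (Fin (n + 1)) k)) ∪
        (subst k (Fin (n + 1)) gm.adjugate '' (I : Set (MvPolynomial (Fin (n + 1)) k)))))
      hJzero
    -- Step 3: finiteness of degree-N exponents
    haveI hBfin : Fintype {β : Fin (n + 1) →₀ ℕ // β.degree = N} :=
      Set.Finite.fintype (s := {β : Fin (n + 1) →₀ ℕ | β.degree = N})
        ((Finsupp.finite_of_degree_le N).subset fun β hβ => le_of_eq hβ)
    set B := {β : Fin (n + 1) →₀ ℕ // β.degree = N} with hB
    set vecL : MvPolynomial (Fin (n + 1)) k →ₗ[k] (B → k) :=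
      LinearMap.pi (fun q : B => MvPolynomial.lcoeff k q.1) with hvecL
    -- Step 4: every standard basis vector is in the span of specialized rows
    have hsingle : ∀ q : B, Pi.single q (1 : k) ∈
        Submodule.span k (vecL '' goodSet k (Fin (n + 1)) I gm.adjugate N) := by
      intro q
      have hmono : (monomial q.1 (1 : k)) ∈
          Submodule.span k (goodSet k (Fin (n + 1)) I gm.adjugate N) := by
        have h2 := hcN_mem_goodSpan hI gm.adjugate N (hN q.1 q.2)
        rwa [homogeneousComponent_of_mem
          ((mem_homogeneousSubmodule _ _).mpr (isHomogeneous_monomial _ q.2)),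
          if_pos rfl] at h2
      have himg := Submodule.mem_map_of_mem (f := vecL) hmono
      rw [Submodule.map_span] at himg
      have heq : vecL (monomial q.1 (1 : k)) = Pi.single q 1 := by
        funext q'
        simp only [hvecL, LinearMap.pi_apply, lcoeff_apply]
        rw [coeff_monomial, Pi.single_apply]
        by_cases h : q' = q
        · subst h
          rw [if_pos rfl, if_pos rfl]
        · rw [if_neg (fun hh => h (Subtype.ext hh.symm)), if_neg h]
      rwa [heq] at himg
    -- Step 5: finite spanning subset
    have hfin : ∀ q : B, ∃ Fq : Finset (B → k),
        (↑Fq : Set (B → k)) ⊆ vecL '' goodSet k (Fin (n + 1)) I gm.adjugate N ∧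
        Pi.single q (1 : k) ∈ Submodule.span k (↑Fq : Set (B → k)) :=
      fun q => Submodule.mem_span_finite_of_mem_span (hsingle q)
    choose Fq hFq1 hFq2 using hfin
    set F : Finset (B → k) := Finset.univ.biUnion Fq with hF
    have hFT : (↑F : Set (B → k)) ⊆ vecL '' goodSet k (Fin (n + 1)) I gm.adjugate N := by
      intro x hx
      rw [hF] at hx
      simp only [Finset.coe_biUnion, Set.mem_iUnion, Finset.mem_coe] at hx
      obtain ⟨q, _, hq⟩ := hx
      exact hFq1 q hq
    have hFtop : Submodule.span k (↑F : Set (B → k)) = ⊤ := by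
      rw [eq_top_iff, ← (Pi.basisFun k B).span_eq]
      apply Submodule.span_le.mpr
      rintro x ⟨q, rfl⟩
      rw [Pi.basisFun_apply]
      exact Submodule.span_mono
        (Finset.coe_subset.mpr (Finset.subset_biUnion_of_mem Fq (Finset.mem_univ q)))
        (hFq2 q)
    -- Step 6: extract a basis from the spanning set
    obtain ⟨s, hsF, hs_span, hs_li⟩ := exists_linearIndependent k (↑F : Set (B → k))
    haveI hsfin : Fintype ↥s := (F.finite_toSet.subset hsF).fintype
    have hs_top : Submodule.span k s = ⊤ := by rw [hs_span, hFtop]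
    let bs : Module.Basis ↥s k (B → k) := Module.Basis.mk hs_li (by
      rw [Subtype.range_coe, hs_top])
    have hcard : Fintype.card B = Fintype.card ↥s := by
      rw [← Module.finrank_eq_card_basis bs, ← Module.finrank_eq_card_basis (Pi.basisFun k B)]
    let e : B ≃ ↥s := Fintype.equivOfCardEq hcard
    -- Step 7: lift the basis vectors to parametric rows
    have hsTmem : ∀ x : ↥s, ∃ u ∈ goodSet k (Fin (n + 1)) I gm.adjugate N, vecL u = ↑x :=
      fun x => hFT (hsF x.2)
    choose u hu hvec using hsTmem
    have hgood : ∀ x : ↥s, ∃ (d : ℕ) (f : MvPolynomial (Fin (n + 1)) k),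
        f ∈ I ∧ f.IsHomogeneous d ∧ ∃ α : Fin (n + 1) →₀ ℕ, α.degree + d = N ∧
          (u x = monomial α 1 * f ∨
           u x = monomial α 1 * subst k (Fin (n + 1)) gm.adjugate f) :=
      fun x => hu x
    choose dd ff hffI hffhom αα hαd hcase using hgood
    set Urow : ↥s → MvPolynomial (Fin (n + 1)) (MvPolynomial (Fin (n + 1) × Fin (n + 1)) k) :=
      fun x => if u x = monomial (αα x) 1 * ff x
        then monomial (αα x) 1 * MvPolynomial.map C (ff x)
        else monomial (αα x) 1 * subst k (Fin (n + 1)) (genM k (Fin (n + 1))).adjugate (ff x)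
      with hUrow
    have hUspec : ∀ (m : Matrix (Fin (n + 1)) (Fin (n + 1)) k) (x : ↥s),
        MvPolynomial.map (eps k (Fin (n + 1)) m) (Urow x)
          = (if u x = monomial (αα x) 1 * ff x then monomial (αα x) 1 * ff x
             else monomial (αα x) 1 * subst k (Fin (n + 1)) m.adjugate (ff x)) := by
      intro m x
      simp only [hUrow]
      by_cases hc : u x = monomial (αα x) 1 * ff x
      · rw [if_pos hc, if_pos hc, map_mul, MvPolynomial.map_monomial, map_one, map_eps_mapC]
      · rw [if_neg hc, if_neg hc, map_mul, MvPolynomial.map_monomial, map_one,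
          map_eps_subst_adj]
    have hspec_homog : ∀ (m : Matrix (Fin (n + 1)) (Fin (n + 1)) k) (x : ↥s),
        (MvPolynomial.map (eps k (Fin (n + 1)) m) (Urow x)).IsHomogeneous N := by
      intro m x
      rw [hUspec m x]
      split_ifs
      · exact hαd x ▸ (isHomogeneous_monomial (1 : k) rfl).mul (hffhom x)
      · exact hαd x ▸ (isHomogeneous_monomial (1 : k) rfl).mul
          (subst_isHomogeneous _ (hffhom x))
    -- the matrix of parametric rows
    set MR : Matrix B B (MvPolynomial (Fin (n + 1) × Fin (n + 1)) k) :=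
      fun q' q => coeff q.1 (Urow (e q')) with hMR
    -- vanishing on Z
    have hvanish : ∀ h' : Matrix.GeneralLinearGroup (Fin (n + 1)) k,
        (∃ v : Fin (n + 1) → k, v ≠ 0 ∧
          (∀ f ∈ I, MvPolynomial.eval v f = 0) ∧
          (∀ f ∈ I, MvPolynomial.eval
            (((h'⁻¹ : Matrix.GeneralLinearGroup (Fin (n + 1)) k) :
              Matrix (Fin (n + 1)) (Fin (n + 1)) k).mulVec v) f = 0)) →
        MvPolynomial.eval (fun ij : Fin (n + 1) × Fin (n + 1) =>
          (h' : Matrix (Fin (n + 1)) (Fin (n + 1)) k) ij.1 ij.2) MR.det = 0 := by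
      intro h' hw
      obtain ⟨v, hv0, hvI, hvinv⟩ := hw
      set hm : Matrix (Fin (n + 1)) (Fin (n + 1)) k :=
        (h' : Matrix (Fin (n + 1)) (Fin (n + 1)) k) with hhm
      have hdet' : hm.det ≠ 0 :=
        ((Matrix.isUnit_iff_isUnit_det hm).mp h'.isUnit).ne_zero
      have hrow0 : ∀ x : ↥s,
          MvPolynomial.eval v (MvPolynomial.map (eps k (Fin (n + 1)) hm) (Urow x)) = 0 := by
        intro x
        rw [hUspec hm x]
        split_ifs
        · rw [map_mul, hvI (ff x) (hffI x), mul_zero]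
        · rw [map_mul, eval_subst, adj_mulVec_eq hdet', eval_smul_homog (hffhom x)]
          have hz : MvPolynomial.eval (hm⁻¹.mulVec v) (ff x) = 0 := by
            have := hvinv (ff x) (hffI x)
            rwa [Matrix.coe_units_inv h'] at this
          rw [hz, mul_zero, mul_zero]
      obtain ⟨i, hvi⟩ := Function.ne_iff.mp hv0
      rw [Pi.zero_apply] at hvi
      set wv : B → k := fun q => MvPolynomial.eval v (monomial q.1 (1 : k)) with hwv
      have hwv0 : wv ≠ 0 := by
        intro h00
        have hq0 : (Finsupp.single i N).degree = N := by
          rw [← degsum']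
          simp [Finsupp.single_apply]
        have h01 := congrFun h00 (⟨Finsupp.single i N, hq0⟩ : B)
        simp only [hwv] at h01
        simp only [Pi.zero_apply] at h01
        have h02 : (Finsupp.single i N).prod (fun n e => v n ^ e) = v i ^ N :=
          Finsupp.prod_single_index (pow_zero (v i))
        rw [eval_monomial, one_mul, h02] at h01
        exact hvi (pow_eq_zero_iff'.mp h01).1
      have hmul0 : (MR.map (eps k (Fin (n + 1)) hm)).mulVec wv = 0 := by
        funext q'
        simp only [Matrix.mulVec, dotProduct, Pi.zero_apply]
        have hsum := eval_homog_eq_sum (hspec_homog hm (e q')) v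
        rw [hrow0 (e q')] at hsum
        rw [show ∑ q : B, (MR.map (eps k (Fin (n + 1)) hm)) q' q * wv q
            = ∑ q : B, coeff q.1 (MvPolynomial.map (eps k (Fin (n + 1)) hm) (Urow (e q')))
                * MvPolynomial.eval v (monomial q.1 (1 : k)) from
          Finset.sum_congr rfl fun q _ => by
            simp only [Matrix.map_apply, hMR, hwv, ← MvPolynomial.coeff_map]
            rw [MvPolynomial.coeff_map]
            rfl]
        exact hsum.symm
      have hdet0 : (MR.map (eps k (Fin (n + 1)) hm)).det = 0 :=
        Matrix.exists_mulVec_eq_zero_iff.mp ⟨wv, hwv0, hmul0⟩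
      show (eps k (Fin (n + 1)) hm) MR.det = 0
      rw [RingHom.map_det, RingHom.mapMatrix_apply]
      exact hdet0
    -- nonvanishing at g
    have hmapg : MR.map (eps k (Fin (n + 1)) gm) = fun q' q => ((e q') : B → k) q := by
      funext q' q
      show (eps k (Fin (n + 1)) gm) (coeff q.1 (Urow (e q'))) = _
      rw [← MvPolynomial.coeff_map, hUspec gm (e q')]
      have hifeq : (if u (e q') = monomial (αα (e q')) 1 * ff (e q')
          then monomial (αα (e q')) 1 * ff (e q')
          else monomial (αα (e q')) 1 * subst k (Fin (n + 1)) gm.adjugate (ff (e q')))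
          = u (e q') := by
        split_ifs with hcc
        · exact hcc.symm
        · exact ((hcase (e q')).resolve_left hcc).symm
      rw [hifeq]
      have hcv2 := congrFun (hvec (e q')) q
      simp only [hvecL, LinearMap.pi_apply, lcoeff_apply] at hcv2
      exact hcv2
    have hnonzero : MvPolynomial.eval (fun ij : Fin (n + 1) × Fin (n + 1) =>
        gm ij.1 ij.2) MR.det ≠ 0 := by
      intro h0
      have hdet0 : (MR.map (eps k (Fin (n + 1)) gm)).det = 0 := by
        rw [← RingHom.mapMatrix_apply, ← RingHom.map_det]
        exact h0
      obtain ⟨c, hc0, hcv⟩ := Matrix.exists_vecMul_eq_zero_iff.mpr hdet0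
      rw [hmapg] at hcv
      have hzero : ∀ q' : B, c q' = 0 := by
        apply Fintype.linearIndependent_iff.mp (hs_li.comp e e.injective) c
        funext q
        simp only [Finset.sum_apply, Pi.smul_apply, smul_eq_mul,
          Function.comp_apply, Pi.zero_apply]
        have hq := congrFun hcv q
        simpa [Matrix.vecMul, dotProduct] using hq
      exact hc0 (funext hzero)
    exact hnonzero (hg MR.det hvanish)
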